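/- There exists a constant C = C(d) such that for all ε ∈ (0,1], Σ_{(n,m) ∈ ℕ^{2d}} (1 + ε(|n+m| + d) + |n−m|)^{−2d−2} ≤ C ε^{−d}. -/

import Mathlib

open scoped ENNReal


lemma tsum_pi_pow {α : Type*} (f : α → ℝ≥0∞) (d : ℕ) :
    ∑' q : Fin d → α, ∏ j, f (q j) = (∑' a, f a) ^ d := by
  induction d with
  | zero =>
      rw [tsum_eq_single (fun i => i.elim0)]
      · simp
      · intro b hb; exact absurd (Subsingleton.elim b _) hb
  | succ n ih =>
      rw [← (Fin.consEquiv (fun _ : Fin (n+1) => α)).tsum_eq, ENNReal.tsum_prod']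
      have h1 : ∀ (a : α) (q : Fin n → α),
          (∏ j, f ((Fin.consEquiv (fun _ : Fin (n+1) => α)) (a, q) j))
            = f a * ∏ j, f (q j) := by
        intro a q
        rw [Fin.prod_univ_succ]
        rfl
      calc ∑' (a : α) (q : Fin n → α),
            ∏ j, f ((Fin.consEquiv (fun _ : Fin (n+1) => α)) (a, q) j)
          = ∑' (a : α) (q : Fin n → α), f a * ∏ j, f (q j) := by
            congr 1; funext a; congr 1; funext q; exact h1 a q
        _ = ∑' (a : α), f a * ∑' q : Fin n → α, ∏ j, f (q j) := by
            congr 1; funext a; exact ENNReal.tsum_mul_left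
        _ = (∑' a, f a) * (∑' a, f a) ^ n := by
            rw [ih, ENNReal.tsum_mul_right]
        _ = (∑' a, f a) ^ (n + 1) := by ring


lemma sum_eps_bound (s ε : ℝ) (hs : 0 ≤ s) (hε : 0 < ε) (hε1 : ε ≤ 1) :
    ∑' ℓ : ℕ, ENNReal.ofReal ((1 + ε * ℓ) ^ (-s)) ≤
      ENNReal.ofReal (2 / ε) * ∑' k : ℕ, ENNReal.ofReal ((1 + (k : ℝ)) ^ (-s)) := by
  have h1ε : 1 ≤ 1 / ε := (le_div_iff₀ hε).2 (by linarith)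
  set N := ⌈1 / ε⌉₊ with hNdef
  haveI : NeZero N := ⟨by positivity⟩
  have hNε : 1 ≤ ε * N := by
    have := Nat.le_ceil (1 / ε)
    calc (1:ℝ) = ε * (1 / ε) := by field_simp
    _ ≤ ε * N := by exact mul_le_mul_of_nonneg_left this hε.le
  rw [← (Nat.divModEquiv N).symm.tsum_eq]
  have hb : ∀ p : ℕ × Fin N,
      ENNReal.ofReal ((1 + ε * ((Nat.divModEquiv N).symm p : ℕ)) ^ (-s)) ≤
        ENNReal.ofReal ((1 + (p.1 : ℝ)) ^ (-s)) := by
    intro ⟨q, r⟩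
    apply ENNReal.ofReal_le_ofReal
    apply Real.rpow_le_rpow_of_nonpos (by positivity) ?_ (neg_nonpos.2 hs)
    have h0 : ((Nat.divModEquiv N).symm (q, r) : ℕ) = q * N + (r : ℕ) := rfl
    rw [h0]
    have : (q : ℝ) ≤ ε * (q * N + (r : ℕ)) := by
      calc (q : ℝ) = q * 1 := by ring
      _ ≤ q * (ε * N) := mul_le_mul_of_nonneg_left hNε (by positivity)
      _ ≤ ε * (q * N + (r : ℕ)) := by
          push_cast; nlinarith [Nat.cast_nonneg (α := ℝ) r, hε.le]
    push_cast
    linarith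
  calc ∑' p : ℕ × Fin N, ENNReal.ofReal ((1 + ε * ((Nat.divModEquiv N).symm p : ℕ)) ^ (-s))
      ≤ ∑' p : ℕ × Fin N, ENNReal.ofReal ((1 + (p.1 : ℝ)) ^ (-s)) := ENNReal.tsum_le_tsum hb
    _ = ∑' q : ℕ, (N : ℝ≥0∞) * ENNReal.ofReal ((1 + (q : ℝ)) ^ (-s)) := by
        rw [ENNReal.tsum_prod']
        congr 1; funext q
        rw [tsum_fintype]
        simp [Finset.sum_const, nsmul_eq_mul]
    _ = (N : ℝ≥0∞) * ∑' q : ℕ, ENNReal.ofReal ((1 + (q : ℝ)) ^ (-s)) := ENNReal.tsum_mul_left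
    _ ≤ ENNReal.ofReal (2 / ε) * ∑' k : ℕ, ENNReal.ofReal ((1 + (k : ℝ)) ^ (-s)) := by
        apply mul_le_mul_left
        rw [← ENNReal.ofReal_natCast]
        apply ENNReal.ofReal_le_ofReal
        have h2 : (N : ℝ) < 1 / ε + 1 := Nat.ceil_lt_add_one (by positivity)
        have h3 : 2 / ε = 1 / ε + 1 / ε := by ring
        linarith
lemma pair_sum_bound (s ε : ℝ) (hs : 0 ≤ s) (hε : 0 < ε) (hε1 : ε ≤ 1) :
    ∑' x : ℕ × ℕ, ENNReal.ofReal ((1 + ε * (min x.1 x.2 : ℕ)) ^ (-s)) *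
        ENNReal.ofReal ((1 + (Nat.dist x.1 x.2 : ℝ)) ^ (-s)) ≤
      2 * (ENNReal.ofReal (2 / ε) * ∑' k : ℕ, ENNReal.ofReal ((1 + (k : ℝ)) ^ (-s))) *
        ∑' k : ℕ, ENNReal.ofReal ((1 + (k : ℝ)) ^ (-s)) := by
  set g : Bool × ℕ × ℕ → ℝ≥0∞ := fun y =>
    ENNReal.ofReal ((1 + ε * (y.2.1 : ℕ)) ^ (-s)) *
      ENNReal.ofReal ((1 + (y.2.2 : ℝ)) ^ (-s)) with hg
  set e : ℕ × ℕ → Bool × ℕ × ℕ :=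
    fun x => (decide (x.1 ≤ x.2), min x.1 x.2, Nat.dist x.1 x.2) with he
  have hinj : Function.Injective e := by
    rintro ⟨a, b⟩ ⟨c, d⟩ h
    simp only [he, Prod.mk.injEq] at h
    obtain ⟨h1, h2, h3⟩ := h
    have h1' : (a ≤ b) ↔ (c ≤ d) := by simpa [decide_eq_decide] using h1
    unfold Nat.dist at h3
    simp only [Prod.mk.injEq]
    omega
  have hstep : ∀ x : ℕ × ℕ,
      ENNReal.ofReal ((1 + ε * (min x.1 x.2 : ℕ)) ^ (-s)) *
        ENNReal.ofReal ((1 + (Nat.dist x.1 x.2 : ℝ)) ^ (-s)) = g (e x) := fun x => rfl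
  calc ∑' x : ℕ × ℕ, ENNReal.ofReal ((1 + ε * (min x.1 x.2 : ℕ)) ^ (-s)) *
        ENNReal.ofReal ((1 + (Nat.dist x.1 x.2 : ℝ)) ^ (-s))
      = ∑' x : ℕ × ℕ, g (e x) := rfl
    _ ≤ ∑' y : Bool × ℕ × ℕ, g y := ENNReal.tsum_comp_le_tsum_of_injective hinj g
    _ = 2 * ∑' z : ℕ × ℕ, ENNReal.ofReal ((1 + ε * (z.1 : ℕ)) ^ (-s)) *
          ENNReal.ofReal ((1 + (z.2 : ℝ)) ^ (-s)) := by
        rw [ENNReal.tsum_prod', tsum_fintype]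
        simp [hg, two_mul]
    _ = 2 * ((∑' ℓ : ℕ, ENNReal.ofReal ((1 + ε * (ℓ : ℕ)) ^ (-s))) *
          ∑' k : ℕ, ENNReal.ofReal ((1 + (k : ℝ)) ^ (-s))) := by
        rw [ENNReal.tsum_prod']
        congr 1
        simp_rw [ENNReal.tsum_mul_left, ENNReal.tsum_mul_right]
    _ ≤ 2 * ((ENNReal.ofReal (2 / ε) * ∑' k : ℕ, ENNReal.ofReal ((1 + (k : ℝ)) ^ (-s))) *
          ∑' k : ℕ, ENNReal.ofReal ((1 + (k : ℝ)) ^ (-s))) := by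
        gcongr
        exact sum_eps_bound s ε hs hε hε1
    _ = _ := by ring


lemma pointwise_bound (d : ℕ) (hd : 1 ≤ d) (ε : ℝ) (hε : 0 < ε)
    (n m : Fin d → ℕ) :
    ENNReal.ofReal ((1 + ε * ((∑ j, ((n j : ℝ) + m j)) + d)
        + (∑ j, |(n j : ℝ) - m j|)) ^ (-2 * (d : ℝ) - 2)) ≤
      ∏ j, (ENNReal.ofReal ((1 + ε * (min (n j) (m j) : ℕ)) ^ (-(1 + 1/(d:ℝ)))) *
            ENNReal.ofReal ((1 + (Nat.dist (n j) (m j) : ℝ)) ^ (-(1 + 1/(d:ℝ))))) := by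
  have hd0 : (0:ℝ) < d := by exact_mod_cast hd
  set s : ℝ := 1 + 1/(d:ℝ) with hs
  have hs0 : 0 < s := by positivity
  have hdist : ∀ j, |(n j : ℝ) - m j| = (Nat.dist (n j) (m j) : ℝ) := by
    intro j
    rcases le_total (n j) (m j) with h | h
    · rw [Nat.dist_eq_sub_of_le h, Nat.cast_sub h, abs_sub_comm,
        abs_of_nonneg (sub_nonneg.2 (Nat.cast_le.2 h))]
    · rw [Nat.dist_eq_sub_of_le_right h, Nat.cast_sub h,
        abs_of_nonneg (sub_nonneg.2 (Nat.cast_le.2 h))]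
  set a : Fin d → ℝ := fun j => ε * (min (n j) (m j) : ℕ) + (Nat.dist (n j) (m j) : ℝ)
    with ha
  have ha0 : ∀ j, 0 ≤ a j := fun j => by positivity
  set B : ℝ := 1 + ε * ((∑ j, ((n j : ℝ) + m j)) + d) + (∑ j, |(n j : ℝ) - m j|) with hB
  have hB1 : 1 + ∑ j, a j ≤ B := by
    rw [hB, ha]
    rw [Finset.sum_add_distrib, ← Finset.mul_sum]
    have h1 : ∑ j, ((min (n j) (m j) : ℕ) : ℝ) ≤ (∑ j, ((n j : ℝ) + m j)) + d := by
      have : ∀ j ∈ Finset.univ, ((min (n j) (m j) : ℕ) : ℝ) ≤ (n j : ℝ) + m j := by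
        intro j _
        have : min (n j) (m j) ≤ n j + m j := le_trans (min_le_left _ _) (Nat.le_add_right _ _)
        push_cast
        exact_mod_cast this
      calc ∑ j, ((min (n j) (m j) : ℕ) : ℝ) ≤ ∑ j, ((n j : ℝ) + m j) :=
            Finset.sum_le_sum this
        _ ≤ (∑ j, ((n j : ℝ) + m j)) + d := by linarith
    have h2 : ∑ j, (Nat.dist (n j) (m j) : ℝ) = ∑ j, |(n j : ℝ) - m j| := by
      simp_rw [hdist]
    rw [h2]
    have := mul_le_mul_of_nonneg_left h1 hε.le
    linarith
  have hsa : 0 ≤ ∑ j, a j := Finset.sum_nonneg fun j _ => ha0 j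
  have hB0 : (1:ℝ) ≤ B := by linarith
  set P : ℝ := ∏ j, (1 + a j) with hP
  have hP0 : 0 < P := Finset.prod_pos fun j _ => by linarith [ha0 j]
  have hPB : P ≤ B ^ d := by
    calc P ≤ ∏ _j : Fin d, (1 + ∑ j, a j) := by
          apply Finset.prod_le_prod
          · intro j _; linarith [ha0 j]
          · intro j _
            have := Finset.single_le_sum (f := a) (fun i _ => ha0 i) (Finset.mem_univ j)
            linarith
      _ = (1 + ∑ j, a j) ^ d := by rw [Finset.prod_const]; simp
      _ ≤ B ^ d := by
          apply pow_le_pow_left₀ (by linarith) hB1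
  -- the real inequality
  have hreal : B ^ (-2 * (d:ℝ) - 2) ≤
      ∏ j, ((1 + ε * (min (n j) (m j) : ℕ)) ^ (-s) * (1 + (Nat.dist (n j) (m j) : ℝ)) ^ (-s)) := by
    have hc : (-2 * (d:ℝ) - 2) = (d:ℝ) * ((-2 * (d:ℝ) - 2) / d) := by
      field_simp
    have hcneg : (-2 * (d:ℝ) - 2) / d ≤ 0 := by
      apply div_nonpos_of_nonpos_of_nonneg <;> nlinarith
    calc B ^ (-2 * (d:ℝ) - 2) = (B ^ (d:ℕ)) ^ ((-2 * (d:ℝ) - 2) / d) := by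
          rw [← Real.rpow_natCast B d, ← Real.rpow_mul (by linarith), ← hc]
      _ ≤ P ^ ((-2 * (d:ℝ) - 2) / d) :=
          Real.rpow_le_rpow_of_nonpos hP0 hPB hcneg
      _ = ∏ j, (1 + a j) ^ ((-2 * (d:ℝ) - 2) / d) :=
          (Real.finset_prod_rpow _ _ (fun j _ => by linarith [ha0 j]) _).symm
      _ ≤ ∏ j, ((1 + ε * (min (n j) (m j) : ℕ)) ^ (-s) * (1 + (Nat.dist (n j) (m j) : ℝ)) ^ (-s)) := by
          apply Finset.prod_le_prod
          · intro j _
            positivity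
          · intro j _
            have hq : (-2 * (d:ℝ) - 2) / d = 2 * (-s) := by
              rw [hs]; field_simp; ring
            rw [hq]
            have expand : (1 + a j) ^ (2 * (-s)) = ((1 + a j) ^ (2:ℕ)) ^ (-s) := by
              rw [← Real.rpow_natCast (1 + a j) 2, ← Real.rpow_mul (by linarith [ha0 j])]
              norm_num
            rw [expand]
            rw [← Real.mul_rpow (by positivity) (by positivity)]
            apply Real.rpow_le_rpow_of_nonpos (by positivity) _ (by linarith)
            have h4 : 0 ≤ ε * (min (n j) (m j) : ℕ) := by positivity
            have h5 : (0:ℝ) ≤ (Nat.dist (n j) (m j) : ℝ) := by positivity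
            simp only [ha]
            nlinarith [h4, h5]
  calc ENNReal.ofReal (B ^ (-2 * (d:ℝ) - 2))
      ≤ ENNReal.ofReal (∏ j, ((1 + ε * (min (n j) (m j) : ℕ)) ^ (-s) *
          (1 + (Nat.dist (n j) (m j) : ℝ)) ^ (-s))) := ENNReal.ofReal_le_ofReal hreal
    _ = _ := by
        rw [ENNReal.ofReal_prod_of_nonneg (fun j _ => by positivity)]
        congr 1
        funext j
        rw [ENNReal.ofReal_mul (by positivity)]

/-- There exists `C = C(d)` such that for all `ε ∈ (0,1]`,
`Σ_{(n,m) ∈ ℕ^{2d}} (1 + ε(|n+m| + d) + |n−m|)^{−2d−2} ≤ C ε^{−d}`. -/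
theorem sum_weight_bound (d : ℕ) :
    ∃ C : ℝ, 0 < C ∧ ∀ ε : ℝ, 0 < ε → ε ≤ 1 →
      ∑' p : (Fin d → ℕ) × (Fin d → ℕ),
        (1 + ε * ((∑ j, ((p.1 j : ℝ) + p.2 j)) + d)
            + (∑ j, |(p.1 j : ℝ) - p.2 j|)) ^ (-2 * (d : ℝ) - 2)
      ≤ C * ε ^ (-(d : ℝ)) := by
  obtain rfl | hd := Nat.eq_zero_or_pos d
  · refine ⟨1, one_pos, fun ε hε hε1 => ?_⟩
    rw [tsum_eq_single (default : (Fin 0 → ℕ) × (Fin 0 → ℕ))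
      (fun b hb => absurd (Subsingleton.elim b _) hb)]
    norm_num [Real.one_rpow, Real.rpow_zero]
  · have hd0 : (0:ℝ) < d := by exact_mod_cast hd
    set s : ℝ := 1 + 1/(d:ℝ) with hs
    have hs1 : 1 < s := by
      rw [hs]; nlinarith [one_div_pos.2 hd0]
    have hs0 : (0:ℝ) ≤ s := by linarith
    have hA_sum : Summable (fun k : ℕ => (1 + (k:ℝ)) ^ (-s)) := by
      have h := Real.summable_nat_rpow.2 (show -s < -1 by linarith)
      have h2 := h.comp_injective Nat.succ_injective
      have : (fun k : ℕ => ((k:ℝ):ℝ) ^ (-s)) ∘ Nat.succ = fun k : ℕ => (1 + (k:ℝ)) ^ (-s) := by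
        funext k
        simp only [Function.comp_apply, Nat.succ_eq_add_one]
        push_cast
        ring_nf
      rwa [this] at h2
    set A := ∑' k : ℕ, (1 + (k:ℝ)) ^ (-s) with hA
    have hA1 : (1:ℝ) ≤ A := by
      have := Summable.le_tsum hA_sum 0 (fun k _ => by positivity)
      simpa using this
    refine ⟨(4*A^2)^d, by positivity, fun ε hε hε1 => ?_⟩
    have hRHS : (4*A^2)^d * ε ^ (-(d:ℝ)) = (4*A^2/ε)^d := by
      rw [Real.rpow_neg hε.le, Real.rpow_natCast, div_pow, div_eq_mul_inv]
    rw [hRHS]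
    set G : ℕ × ℕ → ℝ≥0∞ := fun x =>
      ENNReal.ofReal ((1 + ε * (min x.1 x.2 : ℕ)) ^ (-s)) *
        ENNReal.ofReal ((1 + (Nat.dist x.1 x.2 : ℝ)) ^ (-s)) with hG
    set f : (Fin d → ℕ) × (Fin d → ℕ) → ℝ := fun p =>
      (1 + ε * ((∑ j, ((p.1 j : ℝ) + p.2 j)) + d)
          + (∑ j, |(p.1 j : ℝ) - p.2 j|)) ^ (-2 * (d : ℝ) - 2) with hf
    have hf0 : ∀ p, 0 ≤ f p := by
      intro p
      have h1 : (0:ℝ) ≤ ∑ j, ((p.1 j : ℝ) + p.2 j) :=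
        Finset.sum_nonneg fun j _ => by positivity
      have h2 : (0:ℝ) ≤ ∑ j, |(p.1 j : ℝ) - p.2 j| :=
        Finset.sum_nonneg fun j _ => abs_nonneg _
      have : (0:ℝ) < 1 + ε * ((∑ j, ((p.1 j : ℝ) + p.2 j)) + d)
          + (∑ j, |(p.1 j : ℝ) - p.2 j|) := by positivity
      exact (Real.rpow_pos_of_pos this _).le
    have hK : (∑' k : ℕ, ENNReal.ofReal ((1 + (k:ℝ)) ^ (-s))) = ENNReal.ofReal A :=
      (ENNReal.ofReal_tsum_of_nonneg (fun k => by positivity) hA_sum).symm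
    have key : ∑' p, ENNReal.ofReal (f p) ≤ ENNReal.ofReal ((4*A^2/ε)^d) := by
      calc ∑' p, ENNReal.ofReal (f p)
          ≤ ∑' p : (Fin d → ℕ) × (Fin d → ℕ), ∏ j, G (p.1 j, p.2 j) :=
            ENNReal.tsum_le_tsum fun p => pointwise_bound d hd ε hε p.1 p.2
        _ = ∑' q : Fin d → ℕ × ℕ, ∏ j, G (q j) :=
            ((Equiv.arrowProdEquivProdArrow (Fin d) (fun _ => ℕ) (fun _ => ℕ)).tsum_eq
              (fun p : (Fin d → ℕ) × (Fin d → ℕ) => ∏ j, G (p.1 j, p.2 j))).symm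
        _ = (∑' x : ℕ × ℕ, G x) ^ d := tsum_pi_pow G d
        _ ≤ (2 * (ENNReal.ofReal (2/ε) * ENNReal.ofReal A) * ENNReal.ofReal A) ^ d := by
            gcongr
            rw [← hK]
            exact pair_sum_bound s ε hs0 hε hε1
        _ = ENNReal.ofReal ((4*A^2/ε)^d) := by
            rw [← ENNReal.ofReal_ofNat 2, ← ENNReal.ofReal_mul (by positivity),
              ← ENNReal.ofReal_mul (by positivity), ← ENNReal.ofReal_mul (by positivity),
              ← ENNReal.ofReal_pow (by positivity)]
            congr 1
            field_simp
            ring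
    by_cases hsum : Summable f
    · have h1 : ENNReal.ofReal (∑' p, f p) = ∑' p, ENNReal.ofReal (f p) :=
        ENNReal.ofReal_tsum_of_nonneg hf0 hsum
      exact (ENNReal.ofReal_le_ofReal_iff (by positivity)).1 (h1 ▸ key)
    · rw [tsum_eq_zero_of_not_summable hsum]
      positivity
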